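/- Let θ:[0,1]→ℝ be measurable and let φ:[0,1]→[0,1] be a C¹ increasing bijection with φ(0)=0, φ(1)=1 and φ' > 0 (so that ∫₀¹ φ'(s) ds = 1). Define f(s) = √(2φ'(s))·cos(θ(s)/2) and g(s) = √(2φ'(s))·sin(θ(s)/2). Then the two conditions ∫₀¹ φ'(s)·cos θ(s) ds = 0 and ∫₀¹ φ'(s)·sin θ(s) ds = 0 hold if and only if ∫₀¹ f(s)² ds = 1, ∫₀¹ g(s)² ds = 1, and ∫₀¹ f(s)·g(s) ds = 0. -/

import Mathlib

open MeasureTheory Set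

/-- Let `θ : [0,1] → ℝ` be measurable and `φ : [0,1] → [0,1]` a `C¹` increasing
bijection with `φ(0)=0`, `φ(1)=1`, `φ' > 0`. Define `f = √(2φ')·cos(θ/2)` and
`g = √(2φ')·sin(θ/2)`. Then `∫₀¹ φ' cos θ = 0 ∧ ∫₀¹ φ' sin θ = 0` holds if and only if
`∫₀¹ f² = 1`, `∫₀¹ g² = 1` and `∫₀¹ f·g = 0`. -/
theorem stmt17 (θ : ℝ → ℝ) (hθ : Measurable θ)
    (φ φd : ℝ → ℝ)
    (hφ : ∀ s ∈ Set.Icc (0:ℝ) 1, HasDerivWithinAt φ (φd s) (Set.Icc (0:ℝ) 1) s)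
    (hφc : ContinuousOn φd (Set.Icc (0:ℝ) 1))
    (hφpos : ∀ s ∈ Set.Icc (0:ℝ) 1, 0 < φd s)
    (hφ0 : φ 0 = 0) (hφ1 : φ 1 = 1)
    (f g : ℝ → ℝ)
    (hf : ∀ s, f s = Real.sqrt (2 * φd s) * Real.cos (θ s / 2))
    (hg : ∀ s, g s = Real.sqrt (2 * φd s) * Real.sin (θ s / 2)) :
    ((∫ s in (0:ℝ)..1, φd s * Real.cos (θ s)) = 0 ∧
     (∫ s in (0:ℝ)..1, φd s * Real.sin (θ s)) = 0)
    ↔ ((∫ s in (0:ℝ)..1, (f s) ^ 2) = 1 ∧ (∫ s in (0:ℝ)..1, (g s) ^ 2) = 1 ∧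
       (∫ s in (0:ℝ)..1, f s * g s) = 0) := by
  have huIcc : Set.uIcc (0:ℝ) 1 = Set.Icc 0 1 := uIcc_of_le zero_le_one
  -- integrability of φd on Icc
  have hφdInt : IntegrableOn φd (Set.Icc (0:ℝ) 1) := hφc.integrableOn_Icc
  have hφdSM : AEStronglyMeasurable φd (volume.restrict (Set.Icc (0:ℝ) 1)) :=
    hφc.aestronglyMeasurable measurableSet_Icc
  have hmulInt : ∀ (h : ℝ → ℝ), Measurable h → (∀ x, |h x| ≤ 1) →
      IntegrableOn (fun s => φd s * h (θ s)) (Set.Icc (0:ℝ) 1) := by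
    intro h hm hb
    apply Integrable.mono' hφdInt.abs
    · exact hφdSM.mul ((hm.comp hθ).aestronglyMeasurable)
    · filter_upwards with x
      simp only [Real.norm_eq_abs, abs_mul]
      exact mul_le_of_le_one_right (abs_nonneg _) (hb _)
  have hcosInt : IntervalIntegrable (fun s => φd s * Real.cos (θ s)) volume 0 1 := by
    rw [intervalIntegrable_iff_integrableOn_Icc_of_le zero_le_one]
    exact hmulInt Real.cos Real.measurable_cos (fun x => Real.abs_cos_le_one _)
  have hsinInt : IntervalIntegrable (fun s => φd s * Real.sin (θ s)) volume 0 1 := by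
    rw [intervalIntegrable_iff_integrableOn_Icc_of_le zero_le_one]
    exact hmulInt Real.sin Real.measurable_sin (fun x => Real.abs_sin_le_one _)
  have hφdII : IntervalIntegrable φd volume 0 1 := by
    rw [intervalIntegrable_iff_integrableOn_Icc_of_le zero_le_one]; exact hφdInt
  -- ∫ φd = 1
  have hFTC : (∫ s in (0:ℝ)..1, φd s) = 1 := by
    have := intervalIntegral.integral_eq_sub_of_hasDeriv_right_of_le zero_le_one
      (fun s hs => (hφ s hs).continuousWithinAt)
      (fun x hx => (hφ x (Ioo_subset_Icc_self hx)).mono_of_mem_nhdsWithin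
        (Icc_mem_nhdsGT_of_mem ⟨le_of_lt hx.1, hx.2⟩))
      hφdII
    rw [this, hφ1, hφ0]; ring
  -- pointwise rewrites
  have hsq : ∀ s ∈ Set.Icc (0:ℝ) 1, Real.sqrt (2 * φd s) ^ 2 = 2 * φd s := fun s hs =>
    Real.sq_sqrt (by linarith [hφpos s hs])
  have hf2 : (∫ s in (0:ℝ)..1, (f s) ^ 2)
      = (∫ s in (0:ℝ)..1, φd s) + ∫ s in (0:ℝ)..1, φd s * Real.cos (θ s) := by
    rw [← intervalIntegral.integral_add hφdII hcosInt]
    apply intervalIntegral.integral_congr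
    intro s hs
    rw [huIcc] at hs
    show f s ^ 2 = φd s + φd s * Real.cos (θ s)
    have hc := Real.cos_sq (θ s / 2)
    have h2 : 2 * (θ s / 2) = θ s := by ring
    rw [h2] at hc
    rw [hf s, mul_pow, hsq s hs, hc]
    ring
  have hg2 : (∫ s in (0:ℝ)..1, (g s) ^ 2)
      = (∫ s in (0:ℝ)..1, φd s) - ∫ s in (0:ℝ)..1, φd s * Real.cos (θ s) := by
    rw [← intervalIntegral.integral_sub hφdII hcosInt]
    apply intervalIntegral.integral_congr
    intro s hs
    rw [huIcc] at hs
    show g s ^ 2 = φd s - φd s * Real.cos (θ s)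
    have hc := Real.sin_sq (θ s / 2)
    have hc2 := Real.cos_sq (θ s / 2)
    have h2 : 2 * (θ s / 2) = θ s := by ring
    rw [h2] at hc2
    rw [hg s, mul_pow, hsq s hs, hc, hc2]
    ring
  have hfg : (∫ s in (0:ℝ)..1, f s * g s) = ∫ s in (0:ℝ)..1, φd s * Real.sin (θ s) := by
    apply intervalIntegral.integral_congr
    intro s hs
    rw [huIcc] at hs
    show f s * g s = φd s * Real.sin (θ s)
    rw [hf s, hg s]
    have h1 : Real.sqrt (2 * φd s) * Real.cos (θ s / 2) * (Real.sqrt (2 * φd s) * Real.sin (θ s / 2))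
        = Real.sqrt (2 * φd s) ^ 2 * (Real.sin (θ s / 2) * Real.cos (θ s / 2)) := by ring
    have hs2 : Real.sin (θ s) = 2 * Real.sin (θ s / 2) * Real.cos (θ s / 2) := by
      rw [← Real.sin_two_mul]; congr 1; ring
    rw [h1, hsq s hs, hs2]; ring
  rw [hf2, hg2, hfg, hFTC]
  constructor
  · rintro ⟨h1, h2⟩; exact ⟨by linarith, by linarith, h2⟩
  · rintro ⟨h1, h2, h3⟩; exact ⟨by linarith, h3⟩
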